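/- Let T = (aY, H, t) be a timed causal space and M = M̂(T) the associated Möbius structure on S¹. An event d lies on a timelike line h_e of T if and only if the pair of events (d, e) is M-harmonic. -/
import Mathlib


open Set
open scoped ENNReal

noncomputable section

namespace Paper

/-- The pairs `(x,y)` and `(z,u)` of points of the circle separate each other:
`z` and `u` lie in different connected components of the complement of `{x,y}`. -/
def SeparatesPts (x y z u : Circle) : Prop :=
  z ∈ ({x, y}ᶜ : Set Circle) ∧ u ∈ ({x, y}ᶜ : Set Circle) ∧
    u ∉ connectedComponentIn ({x, y}ᶜ : Set Circle) z

/-- An event: an unordered pair of distinct points of the circle. -/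
abbrev Event : Type := {e : Sym2 Circle // ¬ e.IsDiag}

/-- The underlying two-point subset of the circle of an event. -/
def EventPts (e : Event) : Set Circle := {x | x ∈ e.1}

/-- Two events separate each other as pairs of points on the circle. -/
def EventSep (a b : Event) : Prop :=
  ∃ x y z u : Circle, a.1 = s(x, y) ∧ b.1 = s(z, u) ∧ SeparatesPts x y z u

/-- Two events are in the causal relation iff they do not separate each other. -/
def Causal (a b : Event) : Prop := ¬ EventSep a b

/-- Two events lie on a common light line iff they share a point. -/
def OnLight (a b : Event) : Prop := ∃ x : Circle, x ∈ a.1 ∧ x ∈ b.1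

/-- Strong causal relation: causal and not on a common light line. -/
def StrongCausal (a b : Event) : Prop := Causal a b ∧ ¬ OnLight a b

/-- `U` is one of the two open arcs determined by the event `e`. -/
def IsOpenArc (e : Event) (U : Set Circle) : Prop :=
  ∃ z, z ∉ EventPts e ∧ U = connectedComponentIn (EventPts e)ᶜ z

/-- `a ≤ b ≤ c`: the events `a` and `c` lie in the two (closed) arcs determined
by `b` on different sides of `b`. -/
def Between (a b c : Event) : Prop :=
  ∃ U V : Set Circle, IsOpenArc b U ∧ IsOpenArc b V ∧ U ≠ V ∧
    EventPts a ⊆ closure U ∧ EventPts c ⊆ closure V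

/-- `a < b < c`. -/
def SBtw (a b c : Event) : Prop := Between a b c ∧ a ≠ b ∧ c ≠ b

/-- The event `d` is strictly between the events `a` and `c`: `a` and `c` lie in
different open arcs determined by `d`. -/
def StrictlyBetween (d a c : Event) : Prop :=
  ∃ U V : Set Circle, IsOpenArc d U ∧ IsOpenArc d V ∧ U ≠ V ∧
    EventPts a ⊆ U ∧ EventPts c ⊆ V

/-- `ω` is an infinitely remote point of the semi-metric `d`. -/
def IsRemote (d : Circle → Circle → ℝ≥0∞) (ω : Circle) : Prop :=
  ∀ x, x ≠ ω → d x ω = ⊤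

/-- A semi-metric: symmetric, vanishing exactly on the diagonal, with at most one
infinitely remote point. -/
structure IsSemiMetric (d : Circle → Circle → ℝ≥0∞) : Prop where
  symm : ∀ x y, d x y = d y x
  eq_zero_iff : ∀ x y, d x y = 0 ↔ x = y
  top_remote : ∀ x y, d x y = ⊤ → ∃ ω, IsRemote d ω ∧ (x = ω ∨ y = ω)
  remote_unique : ∀ ω ω', IsRemote d ω → IsRemote d ω' → ω = ω'

/-- The semi-metric `d` has no infinitely remote point in the set `s`. -/
def AvoidsRemote (d : Circle → Circle → ℝ≥0∞) (s : Set Circle) : Prop :=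
  ∀ ω ∈ s, ¬ IsRemote d ω

/-- Real-valued distance. -/
def dR (d : Circle → Circle → ℝ≥0∞) (x y : Circle) : ℝ := (d x y).toReal

/-- A Möbius structure on the circle: a class of pairwise Möbius equivalent
semi-metrics (same cross-ratios on nondegenerate 4-tuples), containing for each
point a semi-metric with that point infinitely remote (metric inversion). -/
structure MoebiusStructure : Type where
  sems : Set (Circle → Circle → ℝ≥0∞)
  nonempty : sems.Nonempty
  isSemiMetric : ∀ d ∈ sems, IsSemiMetric d
  exists_remote : ∀ ω : Circle, ∃ d ∈ sems, IsRemote d ω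
  compatible : ∀ d ∈ sems, ∀ d' ∈ sems, ∀ x y z u : Circle,
    x ≠ y → x ≠ z → x ≠ u → y ≠ z → y ≠ u → z ≠ u →
    AvoidsRemote d {x, y, z, u} → AvoidsRemote d' {x, y, z, u} →
    dR d x z * dR d y u * (dR d' x u * dR d' y z)
      = dR d' x z * dR d' y u * (dR d x u * dR d y z)

/-- The open balls, centered at finite points, of the semi-metrics of `D`
having infinitely remote points. -/
def mBalls (D : Set (Circle → Circle → ℝ≥0∞)) : Set (Set Circle) :=
  {B | ∃ d ∈ D, ∃ ω : Circle, IsRemote d ω ∧ ∃ x : Circle, x ≠ ω ∧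
        ∃ r : ℝ≥0∞, 0 < r ∧ B = {y | d x y < r}}

/-- Axiom (T): the `M`-topology on the circle is the standard one. -/
def AxiomT (M : MoebiusStructure) : Prop :=
  TopologicalSpace.generateFrom (mBalls M.sems)
    = (inferInstance : TopologicalSpace Circle)

/-- Axiom (M): monotonicity. -/
def AxiomM (M : MoebiusStructure) : Prop :=
  ∀ x y z u : Circle, SeparatesPts x y z u →
    ∀ d ∈ M.sems, AvoidsRemote d {x, y, z, u} →
      max (dR d x z * dR d y u) (dR d x u * dR d y z) < dR d x y * dR d z u

/-- A monotone Möbius structure on the circle. -/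
def IsMonotone (M : MoebiusStructure) : Prop := AxiomT M ∧ AxiomM M

/-- The pair of events `a = (x,y)`, `b = (z,u)` is `M`-harmonic:
`|xz|·|yu| = |xu|·|yz|`. -/
def MHarmonic (M : MoebiusStructure) (a b : Event) : Prop :=
  ∃ x y z u : Circle, a.1 = s(x, y) ∧ b.1 = s(z, u) ∧
    ∀ d ∈ M.sems, AvoidsRemote d {x, y, z, u} →
      dR d x z * dR d y u = dR d x u * dR d y z

/-- The timelike line dual to the event `e`, for the Möbius structure `M`. -/
def hline (M : MoebiusStructure) (e : Event) : Set Event := {a | MHarmonic M a e}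

/-- Axiom (h1). -/
def AxH1 (H : Set (Set Event)) (line : Event → Set Event) : Prop :=
  (∀ e, line e ∈ H) ∧ ∀ h ∈ H, ∃ e, h = line e

/-- Axiom (h2): any event on `h_e` separates `e`. -/
def AxH2 (line : Event → Set Event) : Prop := ∀ e a, a ∈ line e → EventSep a e

/-- Axiom (h3): any two events on a timelike line are in the causal relation. -/
def AxH3 (line : Event → Set Event) : Prop :=
  ∀ e a b, a ∈ line e → b ∈ line e → Causal a b

/-- Axiom (h4): for any `x ∉ e` there is a unique event `x_e ∈ h_e` containing `x`. -/
def AxH4 (line : Event → Set Event) : Prop :=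
  ∀ e : Event, ∀ x : Circle, x ∉ EventPts e → ∃! a : Event, a ∈ line e ∧ x ∈ a.1

/-- Axiom (h5): duality. -/
def AxH5 (line : Event → Set Event) : Prop := ∀ e a, a ∈ line e → e ∈ line a

/-- Axiom (h6): two distinct events lie on at most one common timelike line. -/
def AxH6 (line : Event → Set Event) : Prop :=
  ∀ a b : Event, a ≠ b → ∀ e e',
    a ∈ line e → b ∈ line e → a ∈ line e' → b ∈ line e' → e = e'

/-- The projection `x_e`: the unique event of the timelike line `h_e` containing `x`
(junk value if there is none). -/
noncomputable def proj (line : Event → Set Event) (e : Event) (x : Circle) : Event :=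
  letI := Classical.propDecidable (∃ a, a ∈ line e ∧ x ∈ a.1)
  if h : ∃ a, a ∈ line e ∧ x ∈ a.1 then h.choose else e

/-- Axiom (t1). -/
def AxT1 (t : Event → Event → ℝ) : Prop := ∀ a b, Causal a b → 0 ≤ t a b

/-- Axiom (t2). -/
def AxT2 (t : Event → Event → ℝ) : Prop :=
  ∀ a b, Causal a b → (t a b = 0 ↔ OnLight a b)

/-- Axiom (t3). -/
def AxT3 (t : Event → Event → ℝ) : Prop := ∀ a b, Causal a b → t a b = t b a

/-- Axiom (t4a): timelike lines are `t`-geodesics. -/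
def AxT4a (line : Event → Set Event) (t : Event → Event → ℝ) : Prop :=
  ∀ a, ∀ e e' e'', e ∈ line a → e' ∈ line a → e'' ∈ line a →
    Between e e' e'' → t e e' + t e' e'' = t e e''

/-- Axiom (t4b): events at any prescribed time on both sides. -/
def AxT4b (line : Event → Set Event) (t : Event → Event → ℝ) : Prop :=
  ∀ a, ∀ e ∈ line a, ∀ s : ℝ, 0 < s →
    ∃ ep em, ep ∈ line a ∧ em ∈ line a ∧ SBtw em e ep ∧ t e ep = s ∧ t e em = s

/-- Axiom (t5). -/
def AxT5 (line : Event → Set Event) (t : Event → Event → ℝ) : Prop :=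
  ∀ e d : Event, ∀ x y z u : Circle,
    e.1 = s(x, y) → d.1 = s(z, u) → StrongCausal e d →
    t (proj line e z) (proj line e u) = t (proj line d x) (proj line d y)

/-- Axiom (t6): harmonicity. -/
def AxT6 (line : Event → Set Event) (t : Event → Event → ℝ) : Prop :=
  ∀ e d : Event, ∀ x y z u : Circle,
    e.1 = s(x, y) → d.1 = s(z, u) → d ∈ line e →
    ∀ a b : Event, a.1 = s(x, z) → b.1 = s(x, u) →
      t (proj line a y) (proj line a u) = t (proj line b y) (proj line b z)

/-- The time determined by a Möbius structure: `0` on light lines, and the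
cross-ratio formula for events in the strong causal relation via a
common perpendicular. -/
def TimeSpec (M : MoebiusStructure) (t : Event → Event → ℝ) : Prop :=
  (∀ a b, OnLight a b → t a b = 0) ∧
  (∀ a b e : Event, a ∈ hline M e → b ∈ hline M e → a ≠ b →
    ∀ x y z z' : Circle, e.1 = s(x, y) → z ∈ a.1 → z' ∈ b.1 →
      ∀ d ∈ M.sems, AvoidsRemote d {x, y, z, z'} →
        t a b = |Real.log (dR d x z' * dR d y z / (dR d x z * dR d y z'))|)

/-- The function `F_{ab}` of the hierarchy of time conditions, on events `d`
strictly between `(o,ω)` and `(o',ω')`, for `a = (o,o')`, `b = (ω,ω')`. -/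
noncomputable def Fab (line : Event → Set Event) (t : Event → Event → ℝ)
    (o ω o' ω' : Circle) (d : Event) : ℝ :=
  (t (proj line d o) (proj line d ω) + t (proj line d o') (proj line d ω')) / 2

end Paper

namespace Paper

/-- The defining property of the reflection `ρ_e` with respect to the event `e`. -/
def RefSpec (line : Event → Set Event) (e : Event) (ρ : Circle → Circle) : Prop :=
  (∀ p ∈ EventPts e, ρ p = p) ∧
    ∀ x, x ∉ EventPts e → ρ x ≠ x ∧ ∃ a ∈ line e, x ∈ a.1 ∧ ρ x ∈ a.1

/-- The label of a fixed-point-free involution of `Fin 4`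
(the partner of `0`, shifted down by one). -/
def label (σ : Equiv.Perm (Fin 4)) : Fin 3 :=
  if σ 0 = 1 then 0 else if σ 0 = 2 then 1 else 2

/-- The three fixed-point-free involutions of `Fin 4`, i.e. the three partitions of a
4-element set into pairs of opposite edges. -/
def inv3 : Fin 3 → Equiv.Perm (Fin 4) :=
  ![Equiv.swap 0 1 * Equiv.swap 2 3, Equiv.swap 0 2 * Equiv.swap 1 3,
    Equiv.swap 0 3 * Equiv.swap 1 2]

/-- The cross-ratio homomorphism `φ : S₄ → S₃`, acting on the labels of the
partitions into pairs of opposite edges by conjugation. -/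
def permAct (π : Equiv.Perm (Fin 4)) (j : Fin 3) : Fin 3 := label (π * inv3 j * π⁻¹)

/-- A sub-Möbius structure on the circle: a map `regP₄ → L₄` equivariant with respect
to the signed cross-ratio homomorphism. -/
def SubMoebius (M : (Fin 4 → Circle) → Fin 3 → ℝ) : Prop :=
  (∀ q : Fin 4 → Circle, Function.Injective q → M q 0 + M q 1 + M q 2 = 0) ∧
  ∀ q : Fin 4 → Circle, Function.Injective q → ∀ π : Equiv.Perm (Fin 4), ∀ j : Fin 3,
    M (q ∘ π) j = ((Equiv.Perm.sign π : ℤ) : ℝ) * M q (permAct π j)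

/-- The base values of the sub-Möbius structure associated with a timed causal space:
for a 4-tuple `q = (x,y,z,u)` whose cyclic order is `xyuz` (i.e. the pairs `(x,u)` and
`(y,z)` separate each other), `M(q) = (−t_{xy}, t_{yu}, t_{xy} − t_{yu})`, where
`t_{xy}` is the time between the projections of `u`, `z` to the timelike line dual to
the event `(x,y)`, and `t_{yu}` the time between the projections of `z`, `x` to the
timelike line dual to the event `(y,u)`. -/
def BaseSpec (line : Event → Set Event) (t : Event → Event → ℝ)
    (M : (Fin 4 → Circle) → Fin 3 → ℝ) : Prop :=
  ∀ q : Fin 4 → Circle, Function.Injective q →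
    SeparatesPts (q 0) (q 3) (q 1) (q 2) →
    ∀ exy eyu : Event, exy.1 = s(q 0, q 1) → eyu.1 = s(q 1, q 3) →
      M q 0 = -(t (proj line exy (q 3)) (proj line exy (q 2))) ∧
      M q 1 = t (proj line eyu (q 2)) (proj line eyu (q 0)) ∧
      M q 2 = t (proj line exy (q 3)) (proj line exy (q 2))
                - t (proj line eyu (q 2)) (proj line eyu (q 0))

/-- The three cross-ratios `(ln cr₁, ln cr₂, ln cr₃)` of a 4-tuple with respect to a
semi-metric. -/
noncomputable def crMap (dm : Circle → Circle → ℝ≥0∞) (q : Fin 4 → Circle) :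
    Fin 3 → ℝ :=
  ![Real.log (dR dm (q 0) (q 2) * dR dm (q 1) (q 3)
      / (dR dm (q 0) (q 3) * dR dm (q 1) (q 2))),
    Real.log (dR dm (q 0) (q 3) * dR dm (q 1) (q 2)
      / (dR dm (q 0) (q 1) * dR dm (q 2) (q 3))),
    Real.log (dR dm (q 0) (q 1) * dR dm (q 2) (q 3)
      / (dR dm (q 1) (q 3) * dR dm (q 0) (q 2)))]

/-- The semi-metrics whose cross-ratio map is the given map `M`. -/
def mapSems (M : (Fin 4 → Circle) → Fin 3 → ℝ) : Set (Circle → Circle → ℝ≥0∞) :=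
  {dm | IsSemiMetric dm ∧ ∀ q : Fin 4 → Circle, Function.Injective q →
    AvoidsRemote dm (Set.range q) → ∀ j, M q j = crMap dm q j}

/-- Harmonicity of a pair of events with respect to a map-form Möbius structure `M`:
`ln cr₃(u,x,y,z) = 0`. -/
def MapHarmonic (M : (Fin 4 → Circle) → Fin 3 → ℝ) (a b : Event) : Prop :=
  ∃ x y z u : Circle, a.1 = s(x, y) ∧ b.1 = s(z, u) ∧
    Function.Injective ![u, x, y, z] ∧ M ![u, x, y, z] 2 = 0

/-- The 4-tuple `(x₁,x₂,x₃,x₄)` is harmonic with respect to the Möbius structure `M`: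
`|x₁x₃|·|x₂x₄| = |x₁x₄|·|x₂x₃|`. -/
def Harm4 (M : MoebiusStructure) (x₁ x₂ x₃ x₄ : Circle) : Prop :=
  ∀ d ∈ M.sems, AvoidsRemote d {x₁, x₂, x₃, x₄} →
    dR d x₁ x₃ * dR d x₂ x₄ = dR d x₁ x₄ * dR d x₂ x₃

/-- The cross-ratio `cr₁`. -/
noncomputable def cr1R (d : Circle → Circle → ℝ≥0∞) (a b c e : Circle) : ℝ :=
  dR d a c * dR d b e / (dR d a e * dR d b c)

/-- A tuple of points of the circle is in cyclic order. -/
def InCyclicOrder {n : ℕ} (q : Fin n → Circle) : Prop :=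
  ∀ i j k l : Fin n, i < j → j < k → k < l → SeparatesPts (q i) (q k) (q j) (q l)

/-- Increment Axiom (I). -/
def AxiomI (M : MoebiusStructure) : Prop :=
  ∀ q : Fin 7 → Circle, Function.Injective q → InCyclicOrder q →
    Harm4 M (q 0) (q 2) (q 4) (q 5) → Harm4 M (q 1) (q 2) (q 3) (q 5) →
    ∀ d ∈ M.sems, AvoidsRemote d (Set.range q) →
      cr1R d (q 3) (q 4) (q 5) (q 6) < cr1R d (q 0) (q 1) (q 5) (q 6)

/-- The Lambert quadrilateral inequality (LQI). -/
def LQI (line : Event → Set Event) (t : Event → Event → ℝ) : Prop :=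
  ∀ a b : Event, ∀ o o' ω ω' : Circle,
    a.1 = s(o, o') → b.1 = s(ω, ω') → StrongCausal a b → SeparatesPts o ω' o' ω →
    ∀ eA eB : Event, eA.1 = s(o, ω) → eB.1 = s(o', ω') →
    ∀ d₀ : Event, a ∈ line d₀ → b ∈ line d₀ →
    ∀ d : Event, StrictlyBetween d eA eB → d ≠ d₀ → a ∈ line d →
      Fab line t o ω o' ω' d₀ < Fab line t o ω o' ω' d

/-- `g` is an `M`-automorphism: a bijection of the circle preserving the cross-ratios
of the Möbius structure `M`. -/
def MAut (M : MoebiusStructure) (g : Circle ≃ Circle) : Prop :=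
  ∀ d ∈ M.sems, ∀ d' ∈ M.sems, ∀ x y z u : Circle,
    x ≠ y → x ≠ z → x ≠ u → y ≠ z → y ≠ u → z ≠ u →
    AvoidsRemote d {x, y, z, u} → AvoidsRemote d' {g x, g y, g z, g u} →
    dR d' (g x) (g z) * dR d' (g y) (g u) * (dR d x u * dR d y z)
      = dR d x z * dR d y u * (dR d' (g x) (g u) * dR d' (g y) (g z))

theorem map_not_isDiag (g : Circle ≃ Circle) (z : Sym2 Circle) (h : ¬ z.IsDiag) :
    ¬ (z.map g).IsDiag := by
  induction z using Sym2.ind with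
  | _ x y =>
    rw [Sym2.map_pair_eq, Sym2.mk_isDiag_iff]
    rw [Sym2.mk_isDiag_iff] at h
    exact fun hg => h (g.injective hg)

/-- The map of events induced by a bijection of the circle. -/
def emap (g : Circle ≃ Circle) (e : Event) : Event :=
  ⟨e.1.map g, map_not_isDiag g e.1 e.2⟩

end Paper

namespace Paper

section Helpers
open Real


lemma two_pi_pos' : (0:ℝ) < 2 * π := by positivity

/-- Injectivity of `Circle.exp` within a window of length `< 2π`. -/
lemma exp_inj_window {x y : ℝ} (h : Circle.exp x = Circle.exp y) (hxy : |x - y| < 2*π) :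
    x = y := by
  obtain ⟨m, hm⟩ := Circle.exp_eq_exp.mp h
  have h1 : |x - y| = |(m:ℝ)| * (2*π) := by
    rw [hm] ; simp [abs_mul, abs_of_pos two_pi_pos']
  have h2 : |(m:ℝ)| < 1 := by
    have := hxy
    rw [h1] at this
    nlinarith [two_pi_pos']
  have h3 : m = 0 := by
    have h4 : |m| < 1 := by exact_mod_cast h2
    rw [abs_lt] at h4
    omega
  rw [hm, h3] ; simp

lemma exp_ne_window {x y : ℝ} (h : x ≠ y) (hxy : |x - y| < 2*π) :
    Circle.exp x ≠ Circle.exp y := fun he => h (exp_inj_window he hxy)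

/-- The representative of `p` in the window `(a, a + 2π]`. -/
def crep (a : ℝ) (p : Circle) : ℝ := toIocMod two_pi_pos' a (Complex.arg p)

lemma crep_mem (a : ℝ) (p : Circle) : crep a p ∈ Ioc a (a + 2*π) :=
  toIocMod_mem_Ioc _ a _

lemma exp_crep (a : ℝ) (p : Circle) : Circle.exp (crep a p) = p := by
  have h := self_sub_toIocMod two_pi_pos' a (Complex.arg p)
  rw [zsmul_eq_mul] at h
  have h2 : crep a p = Complex.arg p + (-(toIocDiv two_pi_pos' a (Complex.arg p) : ℤ) : ℝ) * (2*π) := by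
    unfold crep ; push_cast ; linarith
  rw [h2, Circle.exp_eq_exp.mpr ⟨(-(toIocDiv two_pi_pos' a (Complex.arg p) : ℤ) : ℤ), by push_cast ; ring⟩]
  exact Circle.exp_arg p

lemma crep_eq_of {a r : ℝ} {p : Circle} (hr : r ∈ Ioc a (a + 2*π)) (he : Circle.exp r = p) :
    crep a p = r := by
  refine exp_inj_window (by rw [exp_crep, he]) ?_
  have h1 := crep_mem a p
  rw [abs_lt]
  constructor <;> [skip; skip] <;>
    · simp only [mem_Ioc] at h1 hr
      nlinarith [two_pi_pos']

lemma crep_lt {a : ℝ} {p : Circle} (hp : p ≠ Circle.exp a) : crep a p < a + 2*π := by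
  rcases lt_or_eq_of_le (crep_mem a p).2 with h | h
  · exact h
  · exfalso
    apply hp
    rw [← exp_crep a p, h, Circle.exp_add_two_pi]

lemma crep_mem_Ioo {a : ℝ} {p : Circle} (hp : p ≠ Circle.exp a) :
    crep a p ∈ Ioo a (a + 2*π) := ⟨(crep_mem a p).1, crep_lt hp⟩

lemma exp_ne_of_rep {a r s : ℝ} (hr : r ∈ Ioc a (a + 2*π)) (hs : s ∈ Ioc a (a + 2*π))
    (hrs : r ≠ s) : Circle.exp r ≠ Circle.exp s := by
  refine exp_ne_window hrs ?_
  simp only [mem_Ioc] at hr hs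
  rw [abs_lt]
  constructor <;> nlinarith [two_pi_pos']

/-- Membership in an arc, in terms of the canonical representative. -/
lemma mem_arc_iff {a s u : ℝ} (hs : a ≤ s) (hu : u ≤ a + 2*π) (p : Circle) :
    p ∈ Circle.exp '' Ioo s u ↔ crep a p ∈ Ioo s u := by
  constructor
  · rintro ⟨r, hr, rfl⟩
    rwa [crep_eq_of ⟨lt_of_le_of_lt hs hr.1, le_of_lt (lt_of_lt_of_le hr.2 hu)⟩ rfl]
  · intro h
    exact ⟨crep a p, h, exp_crep a p⟩

lemma isOpen_arc (s u : ℝ) : IsOpen (Circle.exp '' Ioo s u) :=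
  isLocalHomeomorph_circleExp.isOpenMap _ isOpen_Ioo

lemma isPreconnected_arc (s u : ℝ) : IsPreconnected (Circle.exp '' Ioo s u) :=
  (isPreconnected_Ioo).image _ Circle.exp.continuous.continuousOn

/-- The two open arcs cover the complement of a pair of points. -/
lemma compl_pair_subset {a b : ℝ} (hab : a < b) (hb : b < a + 2*π) :
    ({Circle.exp a, Circle.exp b}ᶜ : Set Circle)
      ⊆ Circle.exp '' Ioo a b ∪ Circle.exp '' Ioo b (a + 2*π) := by
  intro p hp
  simp only [mem_compl_iff, mem_insert_iff, mem_singleton_iff, not_or] at hp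
  have h1 : crep a p ∈ Ioo a (a + 2*π) := crep_mem_Ioo hp.1
  have h2 : crep a p ≠ b := fun h => hp.2 (by rw [← exp_crep a p, h])
  rcases lt_or_gt_of_ne h2 with h | h
  · exact Or.inl ⟨crep a p, ⟨h1.1, h⟩, exp_crep a p⟩
  · exact Or.inr ⟨crep a p, ⟨h, h1.2⟩, exp_crep a p⟩

lemma arc_subset_compl {a b s u : ℝ} (hab : a < b) (hb : b < a + 2*π)
    (has : a ≤ s) (hu : u ≤ a + 2*π) (hbs : b ∉ Ioo s u) :
    Circle.exp '' Ioo s u ⊆ ({Circle.exp a, Circle.exp b}ᶜ : Set Circle) := by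
  rintro p ⟨r, hr, rfl⟩
  simp only [mem_compl_iff, mem_insert_iff, mem_singleton_iff, not_or]
  have hrm : r ∈ Ioc a (a + 2*π) := ⟨lt_of_le_of_lt has hr.1, le_of_lt (lt_of_lt_of_le hr.2 hu)⟩
  constructor
  · rw [show Circle.exp a = Circle.exp (a + 2*π) from (Circle.exp_add_two_pi a).symm]
    apply exp_ne_of_rep (a := a) hrm ⟨by linarith [two_pi_pos'], le_rfl⟩
    intro h ; rw [h] at hr ; linarith [hr.2]
  · apply exp_ne_of_rep (a := a) hrm ⟨hab, le_of_lt hb⟩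
    intro h ; rw [h] at hr ; exact hbs hr


/-- The connected component of a point of the left arc. -/
lemma compIn_arc {a b r : ℝ} (hab : a < b) (hb : b < a + 2*π) (hr : r ∈ Ioo a b) :
    connectedComponentIn ({Circle.exp a, Circle.exp b}ᶜ : Set Circle) (Circle.exp r)
      = Circle.exp '' Ioo a b := by
  set F := ({Circle.exp a, Circle.exp b}ᶜ : Set Circle) with hF
  set U := Circle.exp '' Ioo a b with hU
  set V := Circle.exp '' Ioo b (a + 2*π) with hV
  have hUF : U ⊆ F := arc_subset_compl hab hb le_rfl (le_of_lt hb) (fun h => absurd h.2 (lt_irrefl b))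
  have hVF : V ⊆ F := arc_subset_compl hab hb (le_of_lt hab) le_rfl (fun h => absurd h.1 (lt_irrefl b))
  have hrU : Circle.exp r ∈ U := ⟨r, hr, rfl⟩
  apply Subset.antisymm
  · have hsub : connectedComponentIn F (Circle.exp r) ⊆ U ∪ V := by
      refine (connectedComponentIn_subset F _).trans (compl_pair_subset hab hb)
    have hdisj : Disjoint U V := by
      rw [Set.disjoint_left]
      rintro p hpU hpV
      rw [mem_arc_iff le_rfl (le_of_lt hb)] at hpU
      rw [mem_arc_iff (le_of_lt hab) le_rfl] at hpV
      exact absurd hpV.1 (not_lt.mpr (le_of_lt hpU.2))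
    refine IsPreconnected.subset_left_of_subset_union (isOpen_arc _ _) (isOpen_arc _ _)
      hdisj hsub ⟨Circle.exp r, mem_connectedComponentIn (hUF hrU), hrU⟩ ?_
    exact isPreconnected_connectedComponentIn
  · exact IsPreconnected.subset_connectedComponentIn (isPreconnected_arc _ _) hrU hUF

/-- Coordinate criterion for separation, base form. -/
lemma sep_iff {a b : ℝ} (hab : a < b) (hb : b < a + 2*π) (z u : Circle)
    (hz1 : z ≠ Circle.exp a) (hz2 : z ≠ Circle.exp b)
    (hu1 : u ≠ Circle.exp a) (hu2 : u ≠ Circle.exp b) :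
    SeparatesPts (Circle.exp a) (Circle.exp b) z u ↔
      ((crep a z < b ∧ b < crep a u) ∨ (crep a u < b ∧ b < crep a z)) := by
  have hzm : crep a z ∈ Ioo a (a + 2*π) := crep_mem_Ioo hz1
  have hum : crep a u ∈ Ioo a (a + 2*π) := crep_mem_Ioo hu1
  have hzb : crep a z ≠ b := fun h => hz2 (by rw [← exp_crep a z, h])
  have hub : crep a u ≠ b := fun h => hu2 (by rw [← exp_crep a u, h])
  have hzF : z ∈ ({Circle.exp a, Circle.exp b}ᶜ : Set Circle) := by
    simp only [mem_compl_iff, mem_insert_iff, mem_singleton_iff, not_or] ; exact ⟨hz1, hz2⟩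
  have huF : u ∈ ({Circle.exp a, Circle.exp b}ᶜ : Set Circle) := by
    simp only [mem_compl_iff, mem_insert_iff, mem_singleton_iff, not_or] ; exact ⟨hu1, hu2⟩
  have hz' : z = Circle.exp (crep a z) := (exp_crep a z).symm
  have hu' : u = Circle.exp (crep a u) := (exp_crep a u).symm
  constructor
  · rintro ⟨-, -, hsep⟩
    rcases lt_or_gt_of_ne hzb with hzlt | hzgt
    · rcases lt_or_gt_of_ne hub with hult | hugt
      · exfalso
        apply hsep
        rw [hz', compIn_arc hab hb ⟨hzm.1, hzlt⟩]
        rw [hu'] ; exact ⟨crep a u, ⟨hum.1, hult⟩, rfl⟩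
      · exact Or.inl ⟨hzlt, hugt⟩
    · rcases lt_or_gt_of_ne hub with hult | hugt
      · exact Or.inr ⟨hult, hzgt⟩
      · exfalso
        apply hsep
        have : connectedComponentIn ({Circle.exp a, Circle.exp b}ᶜ : Set Circle) z
            = Circle.exp '' Ioo b (a + 2*π) := by
          rw [hz']
          rw [show ({Circle.exp a, Circle.exp b}ᶜ : Set Circle)
              = ({Circle.exp b, Circle.exp (a + 2*π)}ᶜ : Set Circle) by
            rw [Circle.exp_add_two_pi, Set.pair_comm]]
          exact compIn_arc hb (by linarith [two_pi_pos']) ⟨hzgt, hzm.2⟩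
        rw [this, hu']
        exact ⟨crep a u, ⟨hugt, hum.2⟩, rfl⟩
  · intro h
    refine ⟨hzF, huF, ?_⟩
    rcases h with ⟨h1, h2⟩ | ⟨h1, h2⟩
    · rw [hz', compIn_arc hab hb ⟨hzm.1, h1⟩]
      intro hmem
      rw [mem_arc_iff le_rfl (le_of_lt hb)] at hmem
      exact absurd hmem.2 (not_lt.mpr (le_of_lt h2))
    · rw [hz']
      rw [show ({Circle.exp a, Circle.exp b}ᶜ : Set Circle)
          = ({Circle.exp b, Circle.exp (a + 2*π)}ᶜ : Set Circle) by
        rw [Circle.exp_add_two_pi, Set.pair_comm]]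
      rw [compIn_arc hb (by linarith [two_pi_pos']) ⟨h2, hzm.2⟩]
      rintro ⟨r, hrm, hru⟩
      have : crep a u = r := by
        apply crep_eq_of _ hru
        constructor <;> [linarith [hrm.1, hab]; linarith [hrm.2]]
      rw [this] at h1
      linarith [hrm.1]

lemma exp_ne_base {a z : ℝ} (hz : z ∈ Ioo a (a + 2*π)) :
    Circle.exp z ≠ Circle.exp a := by
  rw [← Circle.exp_add_two_pi a]
  apply exp_ne_of_rep (Ioo_subset_Ioc_self hz) ⟨by linarith [two_pi_pos'], le_rfl⟩
  intro h ; rw [h] at hz ; linarith [hz.2]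

/-- Coordinate criterion for separation, all points given by representatives. -/
lemma sepc {a p z u : ℝ} (hp : p ∈ Ioo a (a + 2*π)) (hz : z ∈ Ioo a (a + 2*π))
    (hu : u ∈ Ioo a (a + 2*π)) (hzp : z ≠ p) (hup : u ≠ p) :
    SeparatesPts (Circle.exp a) (Circle.exp p) (Circle.exp z) (Circle.exp u) ↔
      ((z < p ∧ p < u) ∨ (u < p ∧ p < z)) := by
  have h1 : Circle.exp z ≠ Circle.exp a := exp_ne_base hz
  have h2 : Circle.exp z ≠ Circle.exp p :=
    exp_ne_of_rep (Ioo_subset_Ioc_self hz) (Ioo_subset_Ioc_self hp) hzp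
  have h3 : Circle.exp u ≠ Circle.exp a := exp_ne_base hu
  have h4 : Circle.exp u ≠ Circle.exp p :=
    exp_ne_of_rep (Ioo_subset_Ioc_self hu) (Ioo_subset_Ioc_self hp) hup
  rw [sep_iff hp.1 hp.2 _ _ h1 h2 h3 h4,
    crep_eq_of (Ioo_subset_Ioc_self hz) rfl, crep_eq_of (Ioo_subset_Ioc_self hu) rfl]

lemma sep_swap12 {x y z u : Circle} (h : SeparatesPts x y z u) : SeparatesPts y x z u := by
  rwa [SeparatesPts, Set.pair_comm y x]

lemma sep_swap34 {x y z u : Circle} (h : SeparatesPts x y z u) : SeparatesPts x y u z := by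
  obtain ⟨hz, hu, hcomp⟩ := h
  refine ⟨hu, hz, fun hmem => hcomp ?_⟩
  rw [← connectedComponentIn_eq hmem]
  exact mem_connectedComponentIn hu

lemma sep_ne {x y z u : Circle} (h : SeparatesPts x y z u) :
    z ≠ x ∧ z ≠ y ∧ u ≠ x ∧ u ≠ y ∧ z ≠ u := by
  obtain ⟨hz, hu, hcomp⟩ := h
  simp only [mem_compl_iff, mem_insert_iff, mem_singleton_iff, not_or] at hz hu
  exact ⟨hz.1, hz.2, hu.1, hu.2, fun he => hcomp (he ▸ mem_connectedComponentIn (by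
    simp only [mem_compl_iff, mem_insert_iff, mem_singleton_iff, not_or] ; exact hz))⟩

/-- Transfer separation along `Sym2` equalities of the two pairs. -/
lemma sep_perm {x y z u x' y' z' u' : Circle} (h : SeparatesPts x y z u)
    (h1 : s(x, y) = s(x', y')) (h2 : s(z, u) = s(z', u')) : SeparatesPts x' y' z' u' := by
  rcases Sym2.eq_iff.mp h1 with ⟨rfl, rfl⟩ | ⟨rfl, rfl⟩ <;>
    rcases Sym2.eq_iff.mp h2 with ⟨rfl, rfl⟩ | ⟨rfl, rfl⟩
  · exact h
  · exact sep_swap34 h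
  · exact sep_swap12 h
  · exact sep_swap12 (sep_swap34 h)

/-- Coordinatization of four distinct points of the circle. -/
lemma coord4 {x y z u : Circle} (hxy : x ≠ y) (hxz : x ≠ z) (hxu : x ≠ u)
    (hyz : y ≠ z) (hyu : y ≠ u) (hzu : z ≠ u) :
    ∃ a yr zr ur : ℝ, x = Circle.exp a ∧ y = Circle.exp yr ∧ z = Circle.exp zr ∧
      u = Circle.exp ur ∧ yr ∈ Ioo a (a + 2*π) ∧ zr ∈ Ioo a (a + 2*π) ∧
      ur ∈ Ioo a (a + 2*π) ∧ yr ≠ zr ∧ yr ≠ ur ∧ zr ≠ ur := by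
  refine ⟨Complex.arg x, crep (Complex.arg x) y, crep (Complex.arg x) z,
    crep (Complex.arg x) u, (Circle.exp_arg x).symm, (exp_crep _ y).symm, (exp_crep _ z).symm,
    (exp_crep _ u).symm, crep_mem_Ioo ?_, crep_mem_Ioo ?_, crep_mem_Ioo ?_, ?_, ?_, ?_⟩
  · rw [Circle.exp_arg] ; exact hxy.symm
  · rw [Circle.exp_arg] ; exact hxz.symm
  · rw [Circle.exp_arg] ; exact hxu.symm
  · intro h ; exact hyz (by rw [← exp_crep (Complex.arg x) y, h, exp_crep])
  · intro h ; exact hyu (by rw [← exp_crep (Complex.arg x) y, h, exp_crep])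
  · intro h ; exact hzu (by rw [← exp_crep (Complex.arg x) z, h, exp_crep])

/-- Symmetry of separation. -/
lemma sep_symm {x y z u : Circle} (hxy : x ≠ y) (hxz : x ≠ z) (hxu : x ≠ u)
    (hyz : y ≠ z) (hyu : y ≠ u) (hzu : z ≠ u)
    (h : SeparatesPts x y z u) : SeparatesPts z u x y := by
  obtain ⟨a, yr, zr, ur, hx, hy, hz, hu, hyrm, hzrm, hurm, hyz', hyu', hzu'⟩ :=
    coord4 hxy hxz hxu hyz hyu hzu
  obtain ⟨hb1, hb2⟩ := hyrm ; obtain ⟨hb3, hb4⟩ := hzrm ; obtain ⟨hb5, hb6⟩ := hurm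
  rw [hx, hy, hz, hu] at h ⊢
  rw [sepc ⟨hb1, hb2⟩ ⟨hb3, hb4⟩ ⟨hb5, hb6⟩ (Ne.symm hyz') (Ne.symm hyu')] at h
  rcases h with ⟨h1, h2⟩ | ⟨h1, h2⟩
  · have := (sepc (a := zr) (p := ur) (z := a + 2*π) (u := yr)
      ⟨by linarith, by linarith⟩ ⟨by linarith, by linarith⟩ ⟨by linarith, by linarith⟩
      (by intro hh ; linarith) hyu').mpr (Or.inr ⟨h2, by linarith⟩)
    rwa [Circle.exp_add_two_pi] at this
  · have := (sepc (a := zr) (p := ur + 2*π) (z := a + 2*π) (u := yr + 2*π)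
      ⟨by linarith, by linarith⟩ ⟨by linarith, by linarith⟩ ⟨by linarith, by linarith⟩
      (by intro hh ; linarith) (by intro hh ; exact hyu' (by linarith))).mpr
      (Or.inl ⟨by linarith, by linarith⟩)
    rwa [Circle.exp_add_two_pi, Circle.exp_add_two_pi, Circle.exp_add_two_pi] at this

/-- At most one pairing of four points separates. -/
lemma sep_not_both {x y z u : Circle} (h : SeparatesPts x y z u) :
    ¬ SeparatesPts x z y u := by
  intro h'
  obtain ⟨hzx, hzy, hux, huy, hzu⟩ := sep_ne h
  obtain ⟨hyx, -, -, huz, hyu⟩ := sep_ne h'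
  obtain ⟨a, yr, zr, ur, hx, hy, hz, hu, hyrm, hzrm, hurm, hyz', hyu', hzu'⟩ :=
    coord4 (Ne.symm hyx) (Ne.symm hzx) (Ne.symm hux) (Ne.symm hzy) (Ne.symm huy) hzu
  rw [hx, hy, hz, hu] at h h'
  rw [sepc hyrm hzrm hurm (Ne.symm hyz') (Ne.symm hyu')] at h
  rw [sepc hzrm hyrm hurm hyz' (Ne.symm hzu')] at h'
  rcases h with ⟨h1, h2⟩ | ⟨h1, h2⟩ <;> rcases h' with ⟨h3, h4⟩ | ⟨h3, h4⟩ <;> linarith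

/-- Some pairing of four distinct points separates. -/
lemma sep_exists {x y z u : Circle} (hxy : x ≠ y) (hxz : x ≠ z) (hxu : x ≠ u)
    (hyz : y ≠ z) (hyu : y ≠ u) (hzu : z ≠ u) :
    SeparatesPts x y z u ∨ SeparatesPts x z y u ∨ SeparatesPts x u y z := by
  obtain ⟨a, yr, zr, ur, hx, hy, hz, hu, hyrm, hzrm, hurm, hyz', hyu', hzu'⟩ :=
    coord4 hxy hxz hxu hyz hyu hzu
  rw [hx, hy, hz, hu]
  rw [sepc hyrm hzrm hurm (Ne.symm hyz') (Ne.symm hyu'),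
    sepc hzrm hyrm hurm hyz' (Ne.symm hzu'),
    sepc hurm hyrm hzrm hyu' hzu']
  rcases lt_or_gt_of_ne hyz' with h1 | h1 <;> rcases lt_or_gt_of_ne hyu' with h2 | h2 <;>
    rcases lt_or_gt_of_ne hzu' with h3 | h3 <;>
    first
      | (exact Or.inl (Or.inl ⟨by linarith, by linarith⟩))
      | (exact Or.inl (Or.inr ⟨by linarith, by linarith⟩))
      | (exact Or.inr (Or.inl (Or.inl ⟨by linarith, by linarith⟩)))
      | (exact Or.inr (Or.inl (Or.inr ⟨by linarith, by linarith⟩)))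
      | (exact Or.inr (Or.inr (Or.inl ⟨by linarith, by linarith⟩)))
      | (exact Or.inr (Or.inr (Or.inr ⟨by linarith, by linarith⟩)))

/-- Construct an event from two distinct points. -/
def evOf (p q : Circle) (h : p ≠ q) : Event := ⟨s(p, q), by rwa [Sym2.mk_isDiag_iff]⟩

@[simp] lemma evOf_fst (p q : Circle) (h : p ≠ q) : (evOf p q h).1 = s(p, q) := rfl

lemma event_ext {a b : Event} (h : a.1 = b.1) : a = b := Subtype.ext h

lemma eventPts_eq {e : Event} {p q : Circle} (h : e.1 = s(p, q)) :
    EventPts e = {p, q} := by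
  ext w
  simp only [EventPts, mem_setOf_eq, h, Sym2.mem_iff, mem_insert_iff, mem_singleton_iff]

lemma notmem_eventPts {e : Event} {p q w : Circle} (h : e.1 = s(p, q))
    (h1 : w ≠ p) (h2 : w ≠ q) : w ∉ EventPts e := by
  rw [eventPts_eq h]
  simp only [mem_insert_iff, mem_singleton_iff, not_or]
  exact ⟨h1, h2⟩

lemma event_ne_of_fst {e : Event} {p q : Circle} (h : e.1 = s(p, q)) : p ≠ q := by
  have := e.2 ; rw [h, Sym2.mk_isDiag_iff] at this ; exact this

lemma sym2_other {z : Sym2 Circle} {x : Circle} (h : x ∈ z) : ∃ c, z = s(x, c) := by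
  induction z using Sym2.ind with
  | _ p q =>
    rcases Sym2.mem_iff.mp h with rfl | rfl
    · exact ⟨q, rfl⟩
    · exact ⟨p, Sym2.eq_swap.symm⟩

section Perms

/-- Explicit permutations of `Fin 4` used below. -/
def πf : Equiv.Perm (Fin 4) := ⟨![2,0,3,1], ![1,3,0,2], by decide, by decide⟩
def πs2 : Equiv.Perm (Fin 4) := ⟨![2,0,1,3], ![1,2,0,3], by decide, by decide⟩
def πs3 : Equiv.Perm (Fin 4) := ⟨![3,0,1,2], ![1,2,3,0], by decide, by decide⟩
def πzu : Equiv.Perm (Fin 4) := ⟨![3,1,2,0], ![3,1,2,0], by decide, by decide⟩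

lemma inj4 {u x y z : Circle} (h1 : u ≠ x) (h2 : u ≠ y) (h3 : u ≠ z) (h4 : x ≠ y)
    (h5 : x ≠ z) (h6 : y ≠ z) : Function.Injective ![u, x, y, z] := by
  intro i j hij
  fin_cases i <;> fin_cases j <;> simp_all

lemma inj4_ne {u x y z : Circle} (h : Function.Injective ![u, x, y, z]) :
    u ≠ x ∧ u ≠ y ∧ u ≠ z ∧ x ≠ y ∧ x ≠ z ∧ y ≠ z := by
  refine ⟨?_, ?_, ?_, ?_, ?_, ?_⟩ <;> intro he
  · have := h (a₁ := 0) (a₂ := 1) (by simp [he]) ; simp at this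
  · have := h (a₁ := 0) (a₂ := 2) (by simp [he]) ; simp at this
  · have := h (a₁ := 0) (a₂ := 3) (by simp [he]) ; simp at this
  · have := h (a₁ := 1) (a₂ := 2) (by simp [he]) ; simp at this
  · have := h (a₁ := 1) (a₂ := 3) (by simp [he]) ; simp at this
  · have := h (a₁ := 2) (a₂ := 3) (by simp [he]) ; simp at this

end Perms

section Axioms

variable {line : Event → Set Event} {t : Event → Event → ℝ}

lemma proj_spec (h4 : AxH4 line) {e : Event} {x : Circle} (hx : x ∉ EventPts e) :
    proj line e x ∈ line e ∧ x ∈ (proj line e x).1 := by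
  have hex : ∃ a, a ∈ line e ∧ x ∈ a.1 := (h4 e x hx).exists
  unfold proj
  split
  · exact ‹∃ a, a ∈ line e ∧ x ∈ a.1›.choose_spec
  · exact absurd hex ‹¬_›

lemma proj_eq (h4 : AxH4 line) {e a : Event} {x : Circle} (hx : x ∉ EventPts e)
    (ha : a ∈ line e) (hxa : x ∈ a.1) : proj line e x = a :=
  (h4 e x hx).unique (proj_spec h4 hx) ⟨ha, hxa⟩

/-- Events on a timelike line separate the base event (in any decomposition). -/
lemma mem_line_sep (h2 : AxH2 line) {e a : Event} (ha : a ∈ line e)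
    {p q r s : Circle} (hpq : a.1 = s(p, q)) (hrs : e.1 = s(r, s)) :
    SeparatesPts p q r s := by
  obtain ⟨p', q', r', s', h1, h2', hsep⟩ := h2 e a ha
  exact sep_perm hsep (h1 ▸ hpq) (h2' ▸ hrs)

lemma causal_of_not_sep {a b : Event} {p q v w : Circle} (hab : a.1 = s(p, q))
    (hb : b.1 = s(v, w)) (h : ¬ SeparatesPts p q v w) : Causal a b := by
  rintro ⟨p', q', v', w', h1, h2, hsep⟩
  exact h (sep_perm hsep (h1 ▸ hab : s(p', q') = s(p, q)) (h2 ▸ hb : s(v', w') = s(v, w)))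

lemma not_onLight {a b : Event} {p q v w : Circle} (hab : a.1 = s(p, q))
    (hb : b.1 = s(v, w)) (h1 : p ≠ v) (h2 : p ≠ w) (h3 : q ≠ v) (h4 : q ≠ w) :
    ¬ OnLight a b := by
  rintro ⟨x, hxa, hxb⟩
  rw [hab, Sym2.mem_iff] at hxa
  rw [hb, Sym2.mem_iff] at hxb
  rcases hxa with rfl | rfl <;> rcases hxb with h | h <;> [exact h1 h; exact h2 h;
    exact h3 h; exact h4 h]

lemma t_symm_line (h3 : AxH3 line) (ht3 : AxT3 t) {L a b : Event}
    (ha : a ∈ line L) (hb : b ∈ line L) : t a b = t b a :=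
  ht3 a b (h3 L a b ha hb)

open Real in
/-- The second point of the projection of `exp r` to the line of `(exp s, exp s')` lies in
the arc `(s, s')`, for `s < s' < r < s + 2π`. -/
lemma proj_other (h2 : AxH2 line) (h4 : AxH4 line) {s s' r : ℝ}
    (hss' : s < s') (hr1 : s' < r) (hr2 : r < s + 2*π) {L : Event}
    (hL : L.1 = s(Circle.exp s, Circle.exp s')) :
    ∃ c ∈ Ioo s s', (proj line L (Circle.exp r)).1 = s(Circle.exp r, Circle.exp c) := by
  have hra : Circle.exp r ≠ Circle.exp s := by
    apply exp_ne_base (a := s) ⟨by linarith, by linarith⟩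
  have hrb : Circle.exp r ≠ Circle.exp s' :=
    exp_ne_of_rep (a := s) ⟨by linarith, by linarith⟩ ⟨hss', by linarith [two_pi_pos']⟩
      (by intro h ; linarith)
  have hmem := proj_spec h4 (notmem_eventPts hL hra hrb)
  obtain ⟨c', hc'⟩ := sym2_other hmem.2
  have hsep : SeparatesPts (Circle.exp r) c' (Circle.exp s) (Circle.exp s') :=
    mem_line_sep h2 hmem.1 hc' hL
  obtain ⟨hs_r, hs_c, hs'_r, hs'_c, hss'2⟩ := sep_ne hsep
  have hrc' : Circle.exp r ≠ c' := event_ne_of_fst hc'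
  have hsym : SeparatesPts (Circle.exp s) (Circle.exp s') (Circle.exp r) c' :=
    sep_symm hrc' hra hrb (Ne.symm hs_c) (Ne.symm hs'_c) hss'2 hsep
  have hiff := (sep_iff hss' (by linarith) _ _ hra hrb (Ne.symm hs_c) (Ne.symm hs'_c)).mp hsym
  rw [crep_eq_of (a := s) ⟨by linarith, by linarith⟩ rfl] at hiff
  rcases hiff with ⟨hlt, -⟩ | ⟨hlt, -⟩
  · exact absurd hlt (by linarith)
  · refine ⟨crep s c', ⟨(crep_mem s c').1, hlt⟩, ?_⟩
    rw [exp_crep]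
    exact hc'

open Real in
/-- Positivity of time between distinct projections onto a timelike line. -/
lemma t_pos (h2 : AxH2 line) (h3 : AxH3 line) (h4 : AxH4 line)
    (ht1 : AxT1 t) (ht2 : AxT2 t) {s s' r₁ r₂ : ℝ}
    (hss' : s < s') (hr1 : s' < r₁) (h12 : r₁ < r₂) (h2π : r₂ < s + 2*π) {L : Event}
    (hL : L.1 = s(Circle.exp s, Circle.exp s')) :
    0 < t (proj line L (Circle.exp r₁)) (proj line L (Circle.exp r₂)) := by
  obtain ⟨c₁, hc₁m, hc₁⟩ := proj_other (r := r₁) h2 h4 hss' hr1 (by linarith) hL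
  obtain ⟨c₂, hc₂m, hc₂⟩ := proj_other (r := r₂) h2 h4 hss' (by linarith) h2π hL
  have hne₁a : Circle.exp r₁ ≠ Circle.exp s := exp_ne_base ⟨by linarith, by linarith⟩
  have hne₁b : Circle.exp r₁ ≠ Circle.exp s' :=
    exp_ne_of_rep (a := s) ⟨by linarith, by linarith⟩ ⟨hss', by linarith [two_pi_pos']⟩
      (by intro h ; linarith)
  have hne₂a : Circle.exp r₂ ≠ Circle.exp s := exp_ne_base ⟨by linarith, by linarith⟩
  have hne₂b : Circle.exp r₂ ≠ Circle.exp s' :=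
    exp_ne_of_rep (a := s) ⟨by linarith, by linarith⟩ ⟨hss', by linarith [two_pi_pos']⟩
      (by intro h ; linarith)
  have hP₁ := proj_spec h4 (notmem_eventPts hL hne₁a hne₁b)
  have hP₂ := proj_spec h4 (notmem_eventPts hL hne₂a hne₂b)
  have hrr : Circle.exp r₁ ≠ Circle.exp r₂ :=
    exp_ne_of_rep (a := s) ⟨by linarith, by linarith⟩ ⟨by linarith, by linarith⟩ (ne_of_lt h12)
  have hr₁c₂ : Circle.exp r₁ ≠ Circle.exp c₂ :=
    exp_ne_of_rep (a := s) ⟨by linarith, by linarith⟩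
      ⟨hc₂m.1, by linarith [hc₂m.2, two_pi_pos']⟩ (by intro h ; linarith [hc₂m.2])
  have hc₁r₂ : Circle.exp c₁ ≠ Circle.exp r₂ :=
    exp_ne_of_rep (a := s) ⟨hc₁m.1, by linarith [hc₁m.2, two_pi_pos']⟩
      ⟨by linarith, by linarith⟩ (by intro h ; linarith [hc₁m.2])
  have hcc : Circle.exp c₁ ≠ Circle.exp c₂ := by
    intro hcc
    have hc₁L : Circle.exp c₁ ∉ EventPts L := by
      refine notmem_eventPts hL ?_ ?_
      · exact (exp_ne_base ⟨hc₁m.1, by linarith [hc₁m.2, two_pi_pos']⟩ : _)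
      · exact exp_ne_of_rep (a := s) ⟨hc₁m.1, by linarith [hc₁m.2, two_pi_pos']⟩
          ⟨hss', by linarith [two_pi_pos']⟩ (ne_of_lt hc₁m.2)
    have heq : proj line L (Circle.exp r₁) = proj line L (Circle.exp r₂) :=
      (h4 L (Circle.exp c₁) hc₁L).unique
        ⟨hP₁.1, by rw [hc₁] ; exact Sym2.mem_iff.mpr (Or.inr rfl)⟩
        ⟨hP₂.1, by rw [hc₂, hcc] ; exact Sym2.mem_iff.mpr (Or.inr rfl)⟩
    have : Circle.exp r₂ ∈ (proj line L (Circle.exp r₁)).1 := by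
      rw [heq] ; exact hP₂.2
    rw [hc₁, Sym2.mem_iff] at this
    rcases this with h | h
    · exact hrr h.symm
    · exact hc₁r₂ h.symm
  have hcausal := h3 L _ _ hP₁.1 hP₂.1
  rcases lt_or_eq_of_le (ht1 _ _ hcausal) with h | h
  · exact h
  · exfalso
    have hlight := (ht2 _ _ hcausal).mp h.symm
    exact not_onLight hc₁ hc₂ hrr hr₁c₂ hc₁r₂ hcc hlight

open Real in
/-- Betweenness of three projections onto a timelike line. -/
lemma btw_proj (h2 : AxH2 line) (h3 : AxH3 line) (h4 : AxH4 line) {s s' r₁ r₂ r₃ : ℝ}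
    (hss' : s < s') (hr1 : s' < r₁) (h12 : r₁ < r₂) (h23 : r₂ < r₃) (h2π : r₃ < s + 2*π)
    {L : Event} (hL : L.1 = s(Circle.exp s, Circle.exp s')) :
    Between (proj line L (Circle.exp r₁)) (proj line L (Circle.exp r₂))
      (proj line L (Circle.exp r₃)) := by
  obtain ⟨c₁, hc₁m, hc₁⟩ := proj_other (r := r₁) h2 h4 hss' hr1 (by linarith) hL
  obtain ⟨c₂, hc₂m, hc₂⟩ := proj_other (r := r₂) h2 h4 hss' (by linarith) (by linarith) hL
  obtain ⟨c₃, hc₃m, hc₃⟩ := proj_other (r := r₃) h2 h4 hss' (by linarith) h2π hL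
  -- generic: second points are reversed
  have key : ∀ ra rb ca cb : ℝ, s' < ra → ra < rb → rb < s + 2*π →
      ca ∈ Ioo s s' → cb ∈ Ioo s s' →
      ∀ Pa Pb : Event, Pa ∈ line L → Pb ∈ line L →
      Pa.1 = s(Circle.exp ra, Circle.exp ca) → Pb.1 = s(Circle.exp rb, Circle.exp cb) →
      cb < ca := by
    intro ra rb ca cb hra hrab hrb hca hcb Pa Pb hPa hPb hPa1 hPb1
    rcases lt_trichotomy cb ca with h | h | h
    · exact h
    · exfalso
      have hcaL : Circle.exp ca ∉ EventPts L := by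
        refine notmem_eventPts hL (exp_ne_base ⟨hca.1, by linarith [hca.2, two_pi_pos']⟩) ?_
        exact exp_ne_of_rep (a := s) ⟨hca.1, by linarith [hca.2, two_pi_pos']⟩
          ⟨hss', by linarith [two_pi_pos']⟩ (ne_of_lt hca.2)
      have heq : Pa = Pb :=
        (h4 L (Circle.exp ca) hcaL).unique
          ⟨hPa, by rw [hPa1] ; exact Sym2.mem_iff.mpr (Or.inr rfl)⟩
          ⟨hPb, by rw [hPb1, h] ; exact Sym2.mem_iff.mpr (Or.inr rfl)⟩
      have : Circle.exp rb ∈ Pa.1 := by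
        rw [heq, hPb1] ; exact Sym2.mem_iff.mpr (Or.inl rfl)
      rw [hPa1, Sym2.mem_iff] at this
      rcases this with hh | hh
      · exact (exp_ne_of_rep (a := s) ⟨by linarith, by linarith⟩ ⟨by linarith, by linarith⟩
          (ne_of_gt hrab)) hh
      · exact (exp_ne_of_rep (a := s) ⟨by linarith, by linarith⟩
          ⟨hca.1, by linarith [hca.2, two_pi_pos']⟩ (by intro hhh ; linarith [hca.2])) hh
    · exfalso
      have hsep : SeparatesPts (Circle.exp ra) (Circle.exp ca) (Circle.exp rb)
          (Circle.exp cb) := by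
        have := (sepc (a := ra) (p := ca + 2*π) (z := rb) (u := cb + 2*π)
          ⟨by linarith [hca.1], by linarith [hca.2]⟩
          ⟨hrab, by linarith⟩
          ⟨by linarith [hcb.1], by linarith [hcb.2]⟩
          (by intro hh ; linarith [hca.1]) (by intro hh ; linarith)).mpr
          (Or.inl ⟨by linarith [hca.1], by linarith⟩)
        rwa [Circle.exp_add_two_pi, Circle.exp_add_two_pi] at this
      exact (h3 L Pa Pb hPa hPb) ⟨_, _, _, _, hPa1, hPb1, hsep⟩
  have hne₁a : Circle.exp r₁ ≠ Circle.exp s := exp_ne_base ⟨by linarith, by linarith⟩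
  have hne₁b : Circle.exp r₁ ≠ Circle.exp s' :=
    exp_ne_of_rep (a := s) ⟨by linarith, by linarith⟩ ⟨hss', by linarith [two_pi_pos']⟩
      (by intro h ; linarith)
  have hne₂a : Circle.exp r₂ ≠ Circle.exp s := exp_ne_base ⟨by linarith, by linarith⟩
  have hne₂b : Circle.exp r₂ ≠ Circle.exp s' :=
    exp_ne_of_rep (a := s) ⟨by linarith, by linarith⟩ ⟨hss', by linarith [two_pi_pos']⟩
      (by intro h ; linarith)
  have hne₃a : Circle.exp r₃ ≠ Circle.exp s := exp_ne_base ⟨by linarith, by linarith⟩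
  have hne₃b : Circle.exp r₃ ≠ Circle.exp s' :=
    exp_ne_of_rep (a := s) ⟨by linarith, by linarith⟩ ⟨hss', by linarith [two_pi_pos']⟩
      (by intro h ; linarith)
  have hP₁ := proj_spec h4 (notmem_eventPts hL hne₁a hne₁b)
  have hP₂ := proj_spec h4 (notmem_eventPts hL hne₂a hne₂b)
  have hP₃ := proj_spec h4 (notmem_eventPts hL hne₃a hne₃b)
  have h21 : c₂ < c₁ := key r₁ r₂ c₁ c₂ hr1 h12 (by linarith) hc₁m hc₂m _ _ hP₁.1 hP₂.1 hc₁ hc₂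
  have h32 : c₃ < c₂ := key r₂ r₃ c₂ c₃ (by linarith) h23 h2π hc₂m hc₃m _ _ hP₂.1 hP₃.1 hc₂ hc₃
  -- the arcs of the middle event
  have hpts : EventPts (proj line L (Circle.exp r₂)) = {Circle.exp c₂, Circle.exp r₂} := by
    rw [eventPts_eq hc₂, Set.pair_comm]
  refine ⟨Circle.exp '' Ioo c₂ r₂, Circle.exp '' Ioo r₂ (c₂ + 2*π), ?_, ?_, ?_, ?_, ?_⟩
  · refine ⟨Circle.exp r₁, ?_, ?_⟩
    · rw [hpts]
      simp only [mem_insert_iff, mem_singleton_iff, not_or]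
      constructor
      · exact exp_ne_of_rep (a := s) ⟨by linarith, by linarith⟩
          ⟨hc₂m.1, by linarith [hc₂m.2, two_pi_pos']⟩ (by intro h ; linarith [hc₂m.2])
      · exact exp_ne_of_rep (a := s) ⟨by linarith, by linarith⟩ ⟨by linarith, by linarith⟩
          (ne_of_lt h12)
    · rw [hpts]
      exact (compIn_arc (by linarith [hc₂m.2]) (by linarith [hc₂m.1])
        ⟨by linarith [hc₂m.2], h12⟩).symm
  · refine ⟨Circle.exp r₃, ?_, ?_⟩
    · rw [hpts]
      simp only [mem_insert_iff, mem_singleton_iff, not_or]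
      constructor
      · exact exp_ne_of_rep (a := s) ⟨by linarith, by linarith⟩
          ⟨hc₂m.1, by linarith [hc₂m.2, two_pi_pos']⟩ (by intro h ; linarith [hc₂m.2])
      · exact exp_ne_of_rep (a := s) ⟨by linarith, by linarith⟩ ⟨by linarith, by linarith⟩
          (ne_of_gt h23)
    · rw [hpts]
      rw [show ({Circle.exp c₂, Circle.exp r₂} : Set Circle)
          = {Circle.exp r₂, Circle.exp (c₂ + 2*π)} by rw [Circle.exp_add_two_pi, Set.pair_comm]]
      exact (compIn_arc (by linarith [hc₂m.1]) (by linarith [hc₂m.2])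
        ⟨h23, by linarith [hc₂m.1]⟩).symm
  · intro hUV
    have h1 : Circle.exp r₁ ∈ Circle.exp '' Ioo c₂ r₂ := ⟨r₁, ⟨by linarith [hc₂m.2], h12⟩, rfl⟩
    rw [hUV] at h1
    rw [mem_arc_iff (a := c₂) (by linarith [hc₂m.2] : c₂ ≤ r₂) le_rfl] at h1
    rw [crep_eq_of (a := c₂) ⟨by linarith [hc₂m.2], by linarith [hc₂m.1]⟩ rfl] at h1
    linarith [h1.1]
  · refine subset_trans ?_ subset_closure
    rw [eventPts_eq hc₁]
    rintro w (rfl | rfl)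
    · exact ⟨r₁, ⟨by linarith [hc₂m.2], h12⟩, rfl⟩
    · exact ⟨c₁, ⟨h21, by linarith [hc₁m.2]⟩, rfl⟩
  · refine subset_trans ?_ subset_closure
    rw [eventPts_eq hc₃]
    rintro w (rfl | rfl)
    · exact ⟨r₃, ⟨h23, by linarith [hc₂m.1]⟩, rfl⟩
    · exact ⟨c₃ + 2*π, ⟨by linarith [hc₃m.1], by linarith⟩, Circle.exp_add_two_pi c₃⟩

open Real in
lemma proj_mem_line (h4 : AxH4 line) {s s' r : ℝ}
    (hss' : s < s') (hr1 : s' < r) (hr2 : r < s + 2*π) {L : Event}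
    (hL : L.1 = s(Circle.exp s, Circle.exp s')) :
    proj line L (Circle.exp r) ∈ line L ∧ Circle.exp r ∈ (proj line L (Circle.exp r)).1 := by
  refine proj_spec h4 (notmem_eventPts hL ?_ ?_)
  · exact exp_ne_base ⟨by linarith, by linarith⟩
  · exact exp_ne_of_rep (a := s) ⟨by linarith, by linarith⟩ ⟨hss', by linarith [two_pi_pos']⟩
      (by intro h ; linarith)

open Real in
/-- Additivity of time along a timelike line for ordered projections. -/
lemma t_chain (h2 : AxH2 line) (h3 : AxH3 line) (h4 : AxH4 line) (ht4a : AxT4a line t)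
    {s s' r₁ r₂ r₃ : ℝ}
    (hss' : s < s') (hr1 : s' < r₁) (h12 : r₁ < r₂) (h23 : r₂ < r₃) (h2π : r₃ < s + 2*π)
    {L : Event} (hL : L.1 = s(Circle.exp s, Circle.exp s')) :
    t (proj line L (Circle.exp r₁)) (proj line L (Circle.exp r₂))
      + t (proj line L (Circle.exp r₂)) (proj line L (Circle.exp r₃))
      = t (proj line L (Circle.exp r₁)) (proj line L (Circle.exp r₃)) :=
  ht4a L _ _ _ (proj_mem_line h4 hss' hr1 (by linarith) hL).1
    (proj_mem_line h4 hss' (by linarith) (by linarith) hL).1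
    (proj_mem_line h4 hss' (by linarith) h2π hL).1
    (btw_proj h2 h3 h4 hss' hr1 h12 h23 h2π hL)

open Real in
/-- Distinctness facts for four ordered representatives. -/
lemma exp_ne4 {a p q : ℝ} (h1 : a < p) (h2 : p < q) (h3 : q < a + 2*π) :
    Circle.exp p ≠ Circle.exp q :=
  exp_ne_of_rep (a := a) ⟨h1, by linarith⟩ ⟨by linarith, by linarith⟩ (ne_of_lt h2)

open Real in
/-- The harmonicity equation derived from `M ![u,x,y,z] 2 = 0` in the separating case. -/
lemma Hder {M : (Fin 4 → Circle) → Fin 3 → ℝ} {line : Event → Set Event}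
    {t : Event → Event → ℝ}
    (hbase : BaseSpec line t M) (hsub : SubMoebius M)
    {a zr yr ur : ℝ} (o1 : a < zr) (o2 : zr < yr) (o3 : yr < ur) (o4 : ur < a + 2*π)
    {A B : Event} (hA : A.1 = s(Circle.exp a, Circle.exp zr))
    (hB : B.1 = s(Circle.exp zr, Circle.exp yr))
    (hM2 : M ![Circle.exp ur, Circle.exp a, Circle.exp yr, Circle.exp zr] 2 = 0) :
    t (proj line A (Circle.exp yr)) (proj line A (Circle.exp ur))
      = t (proj line B (Circle.exp ur)) (proj line B (Circle.exp a)) := by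
  set q : Fin 4 → Circle := ![Circle.exp a, Circle.exp zr, Circle.exp ur, Circle.exp yr]
    with hq
  have hinj : Function.Injective q := by
    apply inj4
    · exact (exp_ne_base ⟨o1, by linarith⟩).symm
    · exact (exp_ne_base ⟨by linarith, o4⟩).symm
    · exact (exp_ne_base ⟨by linarith, by linarith⟩).symm
    · exact exp_ne4 o1 (by linarith) o4
    · exact exp_ne4 o1 o2 (by linarith)
    · exact (exp_ne4 (a := a) (by linarith) o3 o4).symm
  have hsep : SeparatesPts (q 0) (q 3) (q 1) (q 2) := by
    show SeparatesPts (Circle.exp a) (Circle.exp yr) (Circle.exp zr) (Circle.exp ur)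
    exact (sepc ⟨by linarith, by linarith⟩ ⟨o1, by linarith⟩ ⟨by linarith, o4⟩
      (ne_of_lt o2) (ne_of_gt o3)).mpr (Or.inl ⟨o2, o3⟩)
  obtain ⟨-, -, e2⟩ := hbase q hinj hsep A B hA hB
  have hperm := hsub.2 q hinj πf 2
  have hcomp : q ∘ πf = ![Circle.exp ur, Circle.exp a, Circle.exp yr, Circle.exp zr] := by
    funext i ; fin_cases i <;> rfl
  rw [hcomp, hM2, show permAct πf 2 = 2 by decide,
    show ((Equiv.Perm.sign πf : ℤ) : ℝ) = -1 by norm_num [show Equiv.Perm.sign πf = -1 by decide]]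
    at hperm
  have : M q 2 = 0 := by linarith
  rw [this] at e2
  have h32 : q 3 = Circle.exp yr := rfl
  have h22 : q 2 = Circle.exp ur := rfl
  have h02 : q 0 = Circle.exp a := rfl
  rw [h32, h22, h02] at e2
  linarith

open Real in
/-- Positivity of a cross time on a line whose base pair does not separate the points. -/
lemma t_pos_xy {line : Event → Set Event} {t : Event → Event → ℝ}
    (h2 : AxH2 line) (h3 : AxH3 line) (h4 : AxH4 line) (ht1 : AxT1 t) (ht2 : AxT2 t)
    (ht3 : AxT3 t)
    {x y z u : Circle} (hxy : x ≠ y) (hxz : x ≠ z) (hxu : x ≠ u) (hyz : y ≠ z)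
    (hyu : y ≠ u) (hzu : z ≠ u) (hnsep : ¬ SeparatesPts x y z u)
    {L : Event} (hL : L.1 = s(x, y)) :
    0 < t (proj line L z) (proj line L u) := by
  obtain ⟨c, yr, zr, ur, hx, hy, hz, hu, hyrm, hzrm, hurm, hyz', hyu', hzu'⟩ :=
    coord4 hxy hxz hxu hyz hyu hzu
  obtain ⟨hb1, hb2⟩ := hyrm ; obtain ⟨hb3, hb4⟩ := hzrm ; obtain ⟨hb5, hb6⟩ := hurm
  rw [hx, hy] at hL
  rw [hz, hu] ; rw [hx, hy, hz, hu] at hnsep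
  rw [sepc ⟨hb1, hb2⟩ ⟨hb3, hb4⟩ ⟨hb5, hb6⟩ (Ne.symm hyz') (Ne.symm hyu')] at hnsep
  push_neg at hnsep
  have hL' : L.1 = s(Circle.exp yr, Circle.exp (c + 2*π)) := by
    rw [hL, Circle.exp_add_two_pi] ; exact Sym2.eq_swap
  rcases lt_or_gt_of_ne hyz' with hyzlt | hyzgt
  · -- z above y ; then u above y as well
    have hyult : yr < ur := by
      rcases lt_or_gt_of_ne hyu' with h | h
      · exact h
      · exact absurd (hnsep.2 h) (not_le.mpr hyzlt)
    rcases lt_or_gt_of_ne hzu' with hzult | hzugt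
    · exact t_pos h2 h3 h4 ht1 ht2 hb1 hyzlt hzult hb6 hL
    · rw [t_symm_line h3 ht3 (proj_mem_line h4 hb1 hyzlt hb4 hL).1
        (proj_mem_line h4 hb1 hyult hb6 hL).1]
      exact t_pos h2 h3 h4 ht1 ht2 hb1 hyult hzugt hb4 hL
  · -- z below y ; then u below y as well
    have hyugt : ur < yr := by
      rcases lt_or_gt_of_ne hyu' with h | h
      · exact absurd (hnsep.1 hyzgt) (not_le.mpr h)
      · exact h
    rw [show Circle.exp zr = Circle.exp (zr + 2*π) from (Circle.exp_add_two_pi zr).symm,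
      show Circle.exp ur = Circle.exp (ur + 2*π) from (Circle.exp_add_two_pi ur).symm]
    rcases lt_or_gt_of_ne hzu' with hzult | hzugt
    · exact t_pos h2 h3 h4 ht1 ht2 (by linarith : yr < c + 2*π)
        (by linarith : c + 2*π < zr + 2*π) (by linarith) (by linarith) hL'
    · rw [t_symm_line h3 ht3
        (proj_mem_line h4 (by linarith : yr < c + 2*π) (by linarith : c + 2*π < zr + 2*π)
          (by linarith) hL').1
        (proj_mem_line h4 (by linarith : yr < c + 2*π) (by linarith : c + 2*π < ur + 2*π)
          (by linarith) hL').1]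
      exact t_pos h2 h3 h4 ht1 ht2 (by linarith : yr < c + 2*π)
        (by linarith : c + 2*π < ur + 2*π) (by linarith) (by linarith) hL'

open Real in
/-- The key uniqueness lemma: the harmonicity equation forces membership in the line. -/
lemma key_mem {line : Event → Set Event} {t : Event → Event → ℝ}
    (h2 : AxH2 line) (h3 : AxH3 line) (h4 : AxH4 line)
    (ht1 : AxT1 t) (ht2 : AxT2 t) (ht3 : AxT3 t) (ht4a : AxT4a line t)
    (ht5 : AxT5 line t) (ht6 : AxT6 line t)
    {a zr yr ur : ℝ} (o1 : a < zr) (o2 : zr < yr) (o3 : yr < ur) (o4 : ur < a + 2*π)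
    {A B eZU : Event} (hA : A.1 = s(Circle.exp a, Circle.exp zr))
    (hB : B.1 = s(Circle.exp zr, Circle.exp yr))
    (heZU : eZU.1 = s(Circle.exp zr, Circle.exp ur))
    (hH : t (proj line A (Circle.exp yr)) (proj line A (Circle.exp ur))
      = t (proj line B (Circle.exp ur)) (proj line B (Circle.exp a)))
    {axy : Event} (haxy : axy.1 = s(Circle.exp a, Circle.exp yr)) :
    axy ∈ line eZU := by
  have hpi := two_pi_pos'
  -- the event of the line through `x = exp a`
  have hxe : Circle.exp a ∉ EventPts eZU :=
    notmem_eventPts heZU (exp_ne_base ⟨o1, by linarith⟩).symm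
      (exp_ne_base ⟨by linarith, o4⟩).symm
  obtain ⟨hd'mem, hd'pt⟩ := proj_spec h4 hxe
  set d' := proj line eZU (Circle.exp a) with hd'
  obtain ⟨w, hw⟩ := sym2_other hd'pt
  have hwa : Circle.exp a ≠ w := event_ne_of_fst hw
  have hwm : crep a w ∈ Ioo a (a + 2*π) := crep_mem_Ioo hwa.symm
  set wr := crep a w with hwr
  have hwE : w = Circle.exp wr := (exp_crep a w).symm
  have hsepw : SeparatesPts (Circle.exp a) (Circle.exp wr) (Circle.exp zr) (Circle.exp ur) := by
    have := mem_line_sep h2 hd'mem hw heZU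
    rwa [hwE] at this
  have hwo : zr < wr ∧ wr < ur := by
    have := (sepc ⟨hwm.1, hwm.2⟩ ⟨o1, by linarith⟩ ⟨by linarith, o4⟩
      (fun h => (sep_ne hsepw).2.1 (by rw [h])) (fun h => (sep_ne hsepw).2.2.2.1 (by rw [h]))).mp hsepw
    rcases this with h | h
    · exact h
    · exact absurd (h.1.trans h.2) (by linarith)
  rcases eq_or_ne wr yr with hwy | hwy
  · -- then d' = axy and we are done
    have : axy = d' := by
      apply event_ext
      rw [haxy, hw, hwE, hwy]
    rw [this] ; exact hd'mem
  exfalso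
  -- the t6 equation for w
  have hne_zw : Circle.exp zr ≠ Circle.exp wr := exp_ne4 o1 hwo.1 (by linarith)
  set B' : Event := evOf (Circle.exp zr) (Circle.exp wr) hne_zw with hB'def
  have hB' : B'.1 = s(Circle.exp zr, Circle.exp wr) := rfl
  have hH' : t (proj line A (Circle.exp ur)) (proj line A (Circle.exp wr))
      = t (proj line B' (Circle.exp ur)) (proj line B' (Circle.exp a)) := by
    have := ht6 eZU d' (Circle.exp zr) (Circle.exp ur) (Circle.exp a) w heZU hw hd'mem
      A B' (hA.trans Sym2.eq_swap) (by rw [hB', hwE])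
    rwa [hwE] at this
  -- the common perpendicular line C
  have hne_xu : Circle.exp a ≠ Circle.exp ur := (exp_ne_base ⟨by linarith, o4⟩).symm
  set C : Event := evOf (Circle.exp a) (Circle.exp ur) hne_xu with hCdef
  have hC : C.1 = s(Circle.exp a, Circle.exp ur) := rfl
  have hC' : C.1 = s(Circle.exp ur, Circle.exp (a + 2*π)) := by
    rw [hC, Circle.exp_add_two_pi] ; exact Sym2.eq_swap
  -- transfer to line C via (t5), for a point v strictly between z and u
  have transfer : ∀ vr : ℝ, zr < vr → vr < ur → ∀ Bv : Event,
      Bv.1 = s(Circle.exp zr, Circle.exp vr) →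
      t (proj line Bv (Circle.exp ur)) (proj line Bv (Circle.exp a))
        = t (proj line C (Circle.exp zr)) (proj line C (Circle.exp vr)) := by
    intro vr hv1 hv2 Bv hBv
    have hcaus : Causal Bv C := by
      apply causal_of_not_sep hBv hC
      intro hcon
      rw [show Circle.exp a = Circle.exp (a + 2*π) from (Circle.exp_add_two_pi a).symm] at hcon
      have := (sepc (a := zr) (p := vr) (z := a + 2*π) (u := ur)
        ⟨hv1, by linarith⟩ ⟨by linarith, by linarith⟩ ⟨by linarith, by linarith⟩
        (by intro h ; linarith) (by intro h ; linarith)).mp hcon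
      rcases this with h | h <;> linarith [h.1, h.2]
    have hlight : ¬ OnLight Bv C := by
      refine not_onLight hBv hC ?_ ?_ ?_ ?_
      · exact (exp_ne_base ⟨o1, by linarith⟩)
      · exact exp_ne4 o1 (by linarith) o4
      · exact (exp_ne_base ⟨by linarith, by linarith⟩)
      · exact exp_ne4 (a := a) (by linarith) hv2 o4
    have := ht5 Bv C (Circle.exp zr) (Circle.exp vr) (Circle.exp a) (Circle.exp ur)
      hBv hC ⟨hcaus, hlight⟩
    rw [← this]
    have hmemU : proj line Bv (Circle.exp ur) ∈ line Bv :=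
      (proj_mem_line h4 hv1 hv2 (by linarith) hBv).1
    have hmemA : proj line Bv (Circle.exp a) ∈ line Bv := by
      rw [show Circle.exp a = Circle.exp (a + 2*π) from (Circle.exp_add_two_pi a).symm]
      exact (proj_mem_line h4 hv1 (by linarith) (by linarith) hBv).1
    exact t_symm_line h3 ht3 hmemU hmemA
  have hGy := transfer yr o2 o3 B hB
  have hGw := transfer wr hwo.1 hwo.2 B' hB'
  have hFw : t (proj line A (Circle.exp ur)) (proj line A (Circle.exp wr))
      = t (proj line A (Circle.exp wr)) (proj line A (Circle.exp ur)) :=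
    t_symm_line h3 ht3 (proj_mem_line h4 o1 (by linarith : zr < ur) (by linarith) hA).1
      (proj_mem_line h4 o1 hwo.1 (by linarith) hA).1
  -- F w = G w and F y = G y
  have hFGw : t (proj line A (Circle.exp wr)) (proj line A (Circle.exp ur))
      = t (proj line C (Circle.exp zr)) (proj line C (Circle.exp wr)) := by
    rw [← hFw, hH', hGw]
  have hFGy : t (proj line A (Circle.exp yr)) (proj line A (Circle.exp ur))
      = t (proj line C (Circle.exp zr)) (proj line C (Circle.exp yr)) := by
    rw [hH, hGy]
  rcases lt_or_gt_of_ne hwy with hlt | hgt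
  · -- wr < yr
    have chainA := t_chain h2 h3 h4 ht4a o1 hwo.1 hlt o3 o4 hA
    have posA := t_pos h2 h3 h4 ht1 ht2 o1 hwo.1 hlt (by linarith) hA
    have chainC := t_chain h2 h3 h4 ht4a (s := ur) (s' := a + 2*π)
      (r₁ := zr + 2*π) (r₂ := wr + 2*π) (r₃ := yr + 2*π)
      (by linarith) (by linarith) (by linarith) (by linarith) (by linarith) hC'
    have posC := t_pos h2 h3 h4 ht1 ht2 (s := ur) (s' := a + 2*π)
      (r₁ := wr + 2*π) (r₂ := yr + 2*π)
      (by linarith) (by linarith) (by linarith) (by linarith) hC'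
    simp only [Circle.exp_add_two_pi] at chainC posC
    linarith
  · -- yr < wr
    have chainA := t_chain h2 h3 h4 ht4a o1 o2 hgt hwo.2 o4 hA
    have posA := t_pos h2 h3 h4 ht1 ht2 o1 o2 hgt (by linarith) hA
    have chainC := t_chain h2 h3 h4 ht4a (s := ur) (s' := a + 2*π)
      (r₁ := zr + 2*π) (r₂ := yr + 2*π) (r₃ := wr + 2*π)
      (by linarith) (by linarith) (by linarith) (by linarith) (by linarith) hC'
    have posC := t_pos h2 h3 h4 ht1 ht2 (s := ur) (s' := a + 2*π)
      (r₁ := yr + 2*π) (r₂ := wr + 2*π)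
      (by linarith) (by linarith) (by linarith) (by linarith) hC'
    simp only [Circle.exp_add_two_pi] at chainC posC
    linarith

/-- If the pairing `(x,z),(y,u)` separates, the harmonicity equation fails. -/
lemma caseS2 {M : (Fin 4 → Circle) → Fin 3 → ℝ} {line : Event → Set Event}
    {t : Event → Event → ℝ}
    (hbase : BaseSpec line t M) (hsub : SubMoebius M)
    (h2 : AxH2 line) (h3 : AxH3 line) (h4 : AxH4 line)
    (ht1 : AxT1 t) (ht2 : AxT2 t) (ht3 : AxT3 t)
    {x y z u : Circle} (hux : u ≠ x) (huy : u ≠ y) (huz : u ≠ z) (hxy : x ≠ y)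
    (hxz : x ≠ z) (hyz : y ≠ z)
    (hM2 : M ![u, x, y, z] 2 = 0) (hs : SeparatesPts x z y u) : False := by
  set q : Fin 4 → Circle := ![x, y, u, z] with hq
  have hinj : Function.Injective q := inj4 hxy (Ne.symm hux) hxz (Ne.symm huy) hyz huz
  have hsep : SeparatesPts (q 0) (q 3) (q 1) (q 2) := by
    show SeparatesPts x z y u ; exact hs
  obtain ⟨e0, -, -⟩ := hbase q hinj hsep (evOf x y hxy) (evOf y z hyz) rfl rfl
  have hperm := hsub.2 q hinj πs2 2
  have hcomp : q ∘ πs2 = ![u, x, y, z] := by funext i ; fin_cases i <;> rfl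
  rw [hcomp, hM2, show permAct πs2 2 = 0 by decide,
    show ((Equiv.Perm.sign πs2 : ℤ) : ℝ) = 1 by
      norm_num [show Equiv.Perm.sign πs2 = 1 by decide]] at hperm
  have h30 : q 3 = z := rfl
  have h20 : q 2 = u := rfl
  rw [h30, h20] at e0
  have hpos := t_pos_xy h2 h3 h4 ht1 ht2 ht3 hxy hxz (Ne.symm hux) hyz (Ne.symm huy)
    (Ne.symm huz) (sep_not_both hs) (L := evOf x y hxy) rfl
  linarith

/-- If the pairing `(x,u),(y,z)` separates, the harmonicity equation fails. -/
lemma caseS3 {M : (Fin 4 → Circle) → Fin 3 → ℝ} {line : Event → Set Event}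
    {t : Event → Event → ℝ}
    (hbase : BaseSpec line t M) (hsub : SubMoebius M)
    (h2 : AxH2 line) (h3 : AxH3 line) (h4 : AxH4 line)
    (ht1 : AxT1 t) (ht2 : AxT2 t) (ht3 : AxT3 t)
    {x y z u : Circle} (hux : u ≠ x) (huy : u ≠ y) (huz : u ≠ z) (hxy : x ≠ y)
    (hxz : x ≠ z) (hyz : y ≠ z)
    (hM2 : M ![u, x, y, z] 2 = 0) (hs : SeparatesPts x u y z) : False := by
  set q : Fin 4 → Circle := ![x, y, z, u] with hq
  have hinj : Function.Injective q := inj4 hxy hxz (Ne.symm hux) hyz (Ne.symm huy) (Ne.symm huz)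
  have hsep : SeparatesPts (q 0) (q 3) (q 1) (q 2) := by
    show SeparatesPts x u y z ; exact hs
  obtain ⟨e0, -, -⟩ := hbase q hinj hsep (evOf x y hxy) (evOf y u (Ne.symm huy)) rfl rfl
  have hperm := hsub.2 q hinj πs3 2
  have hcomp : q ∘ πs3 = ![u, x, y, z] := by funext i ; fin_cases i <;> rfl
  rw [hcomp, hM2, show permAct πs3 2 = 0 by decide,
    show ((Equiv.Perm.sign πs3 : ℤ) : ℝ) = -1 by
      norm_num [show Equiv.Perm.sign πs3 = -1 by decide]] at hperm
  have h30 : q 3 = u := rfl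
  have h20 : q 2 = z := rfl
  rw [h30, h20] at e0
  have hpos := t_pos_xy h2 h3 h4 ht1 ht2 ht3 hxy (Ne.symm hux) hxz (Ne.symm huy)
    hyz huz (sep_not_both hs) (L := evOf x y hxy) rfl
  linarith

end Axioms

end Helpers

end Paper

namespace Paper

/-- for a timed causal space `T` with associated Möbius structure
`M = M̂(T)`, an event `d` lies on the timelike line `h_e` iff the pair `(d, e)` is
`M`-harmonic. -/
theorem stmt10 (line : Event → Set Event) (t : Event → Event → ℝ)
    (h1 : AxH1 (Set.range line) line) (h2 : AxH2 line) (h3 : AxH3 line)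
    (h4 : AxH4 line) (h5 : AxH5 line) (h6 : AxH6 line)
    (ht1 : AxT1 t) (ht2 : AxT2 t) (ht3 : AxT3 t) (ht4a : AxT4a line t)
    (ht4b : AxT4b line t) (ht5 : AxT5 line t) (ht6 : AxT6 line t)
    (M : (Fin 4 → Circle) → Fin 3 → ℝ)
    (hbase : BaseSpec line t M) (hsub : SubMoebius M) :
    ∀ e a : Event, a ∈ line e ↔ MapHarmonic M a e := by
  have hpi := two_pi_pos'
  intro e a
  constructor
  · -- membership implies harmonicity
    intro hmem
    obtain ⟨p, q', r, s, hapq, hers, hsep⟩ := h2 e a hmem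
    have hpq : p ≠ q' := event_ne_of_fst hapq
    obtain ⟨hrp, hrq, hsp, hsq, hrs⟩ := sep_ne hsep
    refine ⟨p, q', r, s, hapq, hers,
      inj4 hsp hsq hrs.symm hpq hrp.symm hrq.symm, ?_⟩
    set qt : Fin 4 → Circle := ![p, r, s, q'] with hqt
    have hinjq : Function.Injective qt := by
      apply inj4 <;> [exact hrp.symm; exact hsp.symm; exact hpq; exact hrs; exact hrq; exact hsq]
    have hsepq : SeparatesPts (qt 0) (qt 3) (qt 1) (qt 2) := by
      show SeparatesPts p q' r s ; exact hsep
    set A : Event := evOf p r hrp.symm with hAdef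
    set Bq : Event := evOf r q' hrq with hBqdef
    obtain ⟨-, -, e2⟩ := hbase qt hinjq hsepq A Bq rfl rfl
    have ht6' := ht6 e a r s p q' hers hapq hmem A Bq (Sym2.eq_swap) rfl
    have hqL : proj line A q' ∈ line A ∧ proj line A s ∈ line A := by
      constructor
      · exact (proj_spec h4 (notmem_eventPts (rfl : A.1 = s(p, r)) hpq.symm hrq.symm)).1
      · exact (proj_spec h4 (notmem_eventPts (rfl : A.1 = s(p, r)) hsp hrs.symm)).1
    have hflip : t (proj line A q') (proj line A s) = t (proj line A s) (proj line A q') :=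
      t_symm_line h3 ht3 hqL.1 hqL.2
    have h30 : qt 3 = q' := rfl
    have h20 : qt 2 = s := rfl
    have h00 : qt 0 = p := rfl
    rw [h30, h20, h00] at e2
    have hM0 : M qt 2 = 0 := by rw [e2, hflip, ht6'] ; ring
    have hperm := hsub.2 qt hinjq πf 2
    have hcomp : qt ∘ πf = ![s, p, q', r] := by funext i ; fin_cases i <;> rfl
    rw [hcomp, show permAct πf 2 = 2 by decide, hM0,
      show ((Equiv.Perm.sign πf : ℤ) : ℝ) = -1 by
        norm_num [show Equiv.Perm.sign πf = -1 by decide]] at hperm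
    rw [hperm] ; ring
  · -- harmonicity implies membership
    rintro ⟨x, y, z, u, ha1, he1, hinj, hM2⟩
    obtain ⟨hux, huy, huz, hxy, hxz, hyz⟩ := inj4_ne hinj
    rcases sep_exists hxy hxz (Ne.symm hux) hyz (Ne.symm huy) (Ne.symm huz) with hs | hs | hs
    · -- the generic case
      obtain ⟨c, yr, zr, ur, hx, hy, hz, hu, hyrm, hzrm, hurm, hyz', hyu', hzu'⟩ :=
        coord4 hxy hxz (Ne.symm hux) hyz (Ne.symm huy) (Ne.symm huz)
      obtain ⟨hb1, hb2⟩ := hyrm ; obtain ⟨hb3, hb4⟩ := hzrm ; obtain ⟨hb5, hb6⟩ := hurm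
      rw [hx, hy] at ha1
      rw [hz, hu] at he1
      rw [hx, hy, hz, hu] at hM2
      rw [hx, hy, hz, hu] at hs
      rw [sepc ⟨hb1, hb2⟩ ⟨hb3, hb4⟩ ⟨hb5, hb6⟩ (Ne.symm hyz') (Ne.symm hyu')] at hs
      rcases hs with ⟨o2, o3⟩ | ⟨o2, o3⟩
      · -- orientation  c < zr < yr < ur
        have hH := Hder (line := line) hbase hsub hb3 o2 o3 hb6
          (rfl : (evOf (Circle.exp c) (Circle.exp zr)
            (exp_ne_base ⟨hb3, hb4⟩).symm).1 = _)
          (rfl : (evOf (Circle.exp zr) (Circle.exp yr)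
            (exp_ne4 hb3 o2 hb2)).1 = _) hM2
        exact key_mem h2 h3 h4 ht1 ht2 ht3 ht4a ht5 ht6 hb3 o2 o3 hb6 rfl rfl he1 hH ha1
      · -- orientation  c < ur < yr < zr : swap the roles of z and u
        have hinj' : Function.Injective
            ![Circle.exp ur, Circle.exp c, Circle.exp yr, Circle.exp zr] := by
          rw [hx, hy, hz, hu] at hinj ; exact hinj
        have hperm := hsub.2 _ hinj' πzu 2
        have hcomp : (![Circle.exp ur, Circle.exp c, Circle.exp yr, Circle.exp zr] ∘ πzu)
            = ![Circle.exp zr, Circle.exp c, Circle.exp yr, Circle.exp ur] := by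
          funext i ; fin_cases i <;> rfl
        rw [hcomp, show permAct πzu 2 = 2 by decide, hM2,
          show ((Equiv.Perm.sign πzu : ℤ) : ℝ) = -1 by
            norm_num [show Equiv.Perm.sign πzu = -1 by decide]] at hperm
        have hM2' : M ![Circle.exp zr, Circle.exp c, Circle.exp yr, Circle.exp ur] 2 = 0 := by
          rw [hperm] ; ring
        have hH := Hder (line := line) hbase hsub hb5 o2 o3 hb4
          (rfl : (evOf (Circle.exp c) (Circle.exp ur)
            (exp_ne_base ⟨hb5, hb6⟩).symm).1 = _)
          (rfl : (evOf (Circle.exp ur) (Circle.exp yr)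
            (exp_ne4 hb5 o2 hb2)).1 = _) hM2'
        exact key_mem h2 h3 h4 ht1 ht2 ht3 ht4a ht5 ht6 hb5 o2 o3 hb4 rfl rfl
          (he1.trans Sym2.eq_swap) hH ha1
    · exact (caseS2 hbase hsub h2 h3 h4 ht1 ht2 ht3
        hux huy huz hxy hxz hyz hM2 hs).elim
    · exact (caseS3 hbase hsub h2 h3 h4 ht1 ht2 ht3
        hux huy huz hxy hxz hyz hM2 hs).elim


end Paper
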